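/- Let E = {e_1,…,e_m} be items ordered by nondecreasing efficiency, let S* be an optimal knapsack-cover solution with maximum-value element f*, and restrict to items of value less than u(f*) plus f* itself. Then any greedy cover S (f* plus a minimal efficiency-ordered prefix reaching cost B') satisfies u(S) ≤ u(S*) + u(f*) ≤ 2 u(S*). -/

import Mathlib

private lemma exchange_lemma {ι : Type*} [DecidableEq ι] (u c : ι → ℕ) (e : ι)
    (he : 1 ≤ c e) (Q T : Finset ι)
    (hQ : ∀ a ∈ Q, u a * c e ≤ u e * c a)
    (hT : ∀ b ∈ T, b ∉ Q → u e * c b ≤ u b * c e)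
    (hcost : ∑ a ∈ Q, c a ≤ ∑ b ∈ T, c b) :
    ∑ a ∈ Q, u a ≤ ∑ b ∈ T, u b := by
  have hQc := Finset.sum_inter_add_sum_sdiff Q T c
  have hTc := Finset.sum_inter_add_sum_sdiff T Q c
  have hQu := Finset.sum_inter_add_sum_sdiff Q T u
  have hTu := Finset.sum_inter_add_sum_sdiff T Q u
  rw [Finset.inter_comm] at hTc hTu
  have h2 : ∑ a ∈ Q \ T, c a ≤ ∑ b ∈ T \ Q, c b := by omega
  have h1 : (∑ a ∈ Q \ T, u a) * c e ≤ u e * (∑ a ∈ Q \ T, c a) := by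
    rw [Finset.sum_mul, Finset.mul_sum]
    exact Finset.sum_le_sum fun a ha => hQ a (Finset.mem_sdiff.mp ha).1
  have h3 : u e * (∑ b ∈ T \ Q, c b) ≤ (∑ b ∈ T \ Q, u b) * c e := by
    rw [Finset.sum_mul, Finset.mul_sum]
    exact Finset.sum_le_sum fun b hb =>
      hT b (Finset.mem_sdiff.mp hb).1 (Finset.mem_sdiff.mp hb).2
  have h4 : (∑ a ∈ Q \ T, u a) * c e ≤ (∑ b ∈ T \ Q, u b) * c e :=
    h1.trans ((Nat.mul_le_mul_left _ h2).trans h3)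
  have h5 : ∑ a ∈ Q \ T, u a ≤ ∑ b ∈ T \ Q, u b :=
    Nat.le_of_mul_le_mul_right (by omega) he
  omega

theorem stmt19 {ι : Type*} [Fintype ι] [DecidableEq ι] (u c : ι → ℕ)
    (hc : ∀ e, 1 ≤ c e) (B' : ℕ) (hB : B' ≤ ∑ e, c e)
    (Sstar : Finset ι) (hcov : B' ≤ ∑ e ∈ Sstar, c e)
    (hopt : ∀ T : Finset ι, B' ≤ ∑ e ∈ T, c e → ∑ e ∈ Sstar, u e ≤ ∑ e ∈ T, u e)
    (fstar : ι) (hf : fstar ∈ Sstar) (hfmax : ∀ e ∈ Sstar, u e ≤ u fstar)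
    (hties : ∀ e ∈ Sstar, e ≠ fstar → u e < u fstar)
    (L : List ι) (hnodup : L.Nodup)
    (hLmem : ∀ e : ι, e ∈ L ↔ (u e < u fstar ∧ e ≠ fstar))
    (hsort : L.Pairwise (fun a b => u a * c b ≤ u b * c a))
    (j : ℕ) (hj : j ≤ L.length)
    (hjcov : B' ≤ c fstar + ((L.take j).map c).sum)
    (hjmin : ∀ j' < j, c fstar + ((L.take j').map c).sum < B') :
    u fstar + ((L.take j).map u).sum ≤ (∑ e ∈ Sstar, u e) + u fstar ∧
    (∑ e ∈ Sstar, u e) + u fstar ≤ 2 * ∑ e ∈ Sstar, u e := by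
  have hfu : u fstar ≤ ∑ e ∈ Sstar, u e :=
    Finset.single_le_sum (fun i _ => Nat.zero_le _) hf
  constructor
  · -- main part
    rcases Nat.eq_zero_or_pos j with hj0 | hjpos
    · subst hj0; simp only [List.take_zero, List.map_nil, List.sum_nil, Nat.add_zero]; exact hfu.trans (Nat.le_add_right _ _)
    · obtain ⟨k, rfl⟩ : ∃ k, j = k + 1 := ⟨j - 1, by omega⟩
      have hk : k < L.length := by omega
      set e : ι := L[k] with he
      -- decomposition of L
      have hLdec : L = L.take k ++ e :: L.drop (k + 1) := by
        conv_lhs => rw [← List.take_append_drop k L]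
        rw [List.drop_eq_getElem_cons hk]
      -- sorted relations
      have hpw : List.Pairwise (fun a b => u a * c b ≤ u b * c a) L := hsort
      rw [hLdec, List.pairwise_append] at hpw
      obtain ⟨hpw1, hpw2, hpw3⟩ := hpw
      have hrelQ : ∀ a ∈ L.take k, u a * c e ≤ u e * c a := fun a ha =>
        hpw3 a ha e List.mem_cons_self
      have hrelT : ∀ b ∈ L.drop k, u e * c b ≤ u b * c e := by
        intro b hb
        rw [List.drop_eq_getElem_cons hk, List.mem_cons] at hb
        rcases hb with rfl | hb
        · exact le_refl _
        · exact (List.pairwise_cons.mp hpw2).1 b hb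
      -- the finsets
      set Q : Finset ι := (L.take k).toFinset with hQdef
      set T : Finset ι := Sstar.erase fstar with hTdef
      have hnodupk : (L.take k).Nodup := hnodup.sublist (List.take_sublist _ _)
      have hsumQu : ∑ a ∈ Q, u a = ((L.take k).map u).sum :=
        List.sum_toFinset u hnodupk
      have hsumQc : ∑ a ∈ Q, c a = ((L.take k).map c).sum :=
        List.sum_toFinset c hnodupk
      have hTsub : ∀ b ∈ T, b ∈ L := by
        intro b hb
        rw [hTdef, Finset.mem_erase] at hb
        exact (hLmem b).mpr ⟨hties b hb.2 hb.1, hb.1⟩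
      have hsumTc : ∑ b ∈ T, c b = (∑ x ∈ Sstar, c x) - c fstar := by
        rw [hTdef, ← Finset.add_sum_erase _ c hf]; omega
      have hsumTu : ∑ b ∈ T, u b = (∑ x ∈ Sstar, u x) - u fstar := by
        rw [hTdef, ← Finset.add_sum_erase _ u hf]; omega
      have hcost : ∑ a ∈ Q, c a ≤ ∑ b ∈ T, c b := by
        have h1 := hjmin k (by omega)
        have h2 : u fstar ≤ u fstar := le_refl _
        have := Finset.add_sum_erase _ c hf
        rw [hsumQc, hsumTc]; omega
      have key : ∑ a ∈ Q, u a ≤ ∑ b ∈ T, u b := by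
        apply exchange_lemma u c e (hc e) Q T
        · intro a ha; exact hrelQ a (List.mem_toFinset.mp ha)
        · intro b hb hbQ
          apply hrelT
          have hbL := hTsub b hb
          have : b ∈ L.take k ++ L.drop k := by rwa [List.take_append_drop]
          rcases List.mem_append.mp this with h | h
          · exact absurd (List.mem_toFinset.mpr h) hbQ
          · exact h
        · exact hcost
      have hlast : u e < u fstar := ((hLmem e).mp (List.getElem_mem hk)).1
      have htake : ((L.take (k + 1)).map u).sum = ((L.take k).map u).sum + u e := by
        rw [List.map_take, List.map_take, List.sum_take_succ _ _ (by simpa using hk),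
          List.getElem_map]
      rw [htake]
      rw [hsumQu, hsumTu] at key
      omega
  · omega
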